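/- Sinkhorn's theorem (existence): for every real n×n matrix A with all entries strictly positive, there exist diagonal n×n matrices D₁ and D₂ with strictly positive diagonal entries such that D₁ A D₂ is doubly stochastic. -/

import Mathlib

open Matrix Finset Real

noncomputable def sinkH {n : ℕ} (A : Matrix (Fin n) (Fin n) ℝ) (b : Fin n → ℝ) : ℝ :=
  ∑ i, Real.log (∑ j, A i j * Real.exp (b j)) - ∑ j, b j

lemma sinkH_sum_pos {n : ℕ} (hn : 0 < n) (A : Matrix (Fin n) (Fin n) ℝ)
    (hA : ∀ i j, 0 < A i j) (b : Fin n → ℝ) (i : Fin n) :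
    0 < ∑ j, A i j * Real.exp (b j) := by
  haveI : Nonempty (Fin n) := Fin.pos_iff_nonempty.mp hn
  exact Finset.sum_pos (fun j _ => mul_pos (hA i j) (Real.exp_pos _)) univ_nonempty

lemma sinkH_continuous {n : ℕ} (hn : 0 < n) (A : Matrix (Fin n) (Fin n) ℝ)
    (hA : ∀ i j, 0 < A i j) : Continuous (sinkH A) := by
  unfold sinkH
  refine Continuous.sub ?_ (continuous_finset_sum _ fun j _ => continuous_apply j)
  refine continuous_finset_sum _ fun i _ => Continuous.log ?_ ?_
  · exact continuous_finset_sum _ fun j _ =>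
      continuous_const.mul (Real.continuous_exp.comp (continuous_apply j))
  · exact fun b => (sinkH_sum_pos hn A hA b i).ne'

lemma sinkH_shift {n : ℕ} (hn : 0 < n) (A : Matrix (Fin n) (Fin n) ℝ)
    (hA : ∀ i j, 0 < A i j) (b : Fin n → ℝ) (c : ℝ) :
    sinkH A (fun j => b j + c) = sinkH A b := by
  unfold sinkH
  have key : ∀ i : Fin n, Real.log (∑ j, A i j * Real.exp (b j + c))
      = Real.log (∑ j, A i j * Real.exp (b j)) + c := by
    intro i
    have : (∑ j, A i j * Real.exp (b j + c)) = (∑ j, A i j * Real.exp (b j)) * Real.exp c := by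
      rw [Finset.sum_mul]
      exact Finset.sum_congr rfl fun j _ => by rw [Real.exp_add]; ring
    rw [this, Real.log_mul (sinkH_sum_pos hn A hA b i).ne' (Real.exp_ne_zero c),
      Real.log_exp]
  rw [Finset.sum_congr rfl fun i _ => key i, Finset.sum_add_distrib, Finset.sum_add_distrib]
  simp

lemma sinkH_exists_min {n : ℕ} (hn : 0 < n) (A : Matrix (Fin n) (Fin n) ℝ)
    (hA : ∀ i j, 0 < A i j) :
    ∃ b : Fin n → ℝ, ∀ b', sinkH A b ≤ sinkH A b' := by
  haveI : Nonempty (Fin n) := Fin.pos_iff_nonempty.mp hn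
  -- uniform lower bound on entries
  obtain ⟨⟨i0, j0⟩, -, hε⟩ := Finset.exists_min_image (univ : Finset (Fin n × Fin n))
    (fun p => A p.1 p.2) univ_nonempty
  set ε : ℝ := A i0 j0 with hεdef
  have hεpos : 0 < ε := hA i0 j0
  have hεle : ∀ i j, ε ≤ A i j := fun i j => hε (i, j) (mem_univ _)
  -- key coercivity bound
  have key : ∀ b : Fin n → ℝ, ∑ j, b j = 0 → ∀ k,
      (n : ℝ) * Real.log ε + n * b k ≤ sinkH A b := by
    intro b hb k
    have hterm : ∀ i : Fin n, Real.log ε + b k ≤ Real.log (∑ j, A i j * Real.exp (b j)) := by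
      intro i
      have h1 : ε * Real.exp (b k) ≤ ∑ j, A i j * Real.exp (b j) := by
        calc ε * Real.exp (b k) ≤ A i k * Real.exp (b k) :=
              mul_le_mul_of_nonneg_right (hεle i k) (Real.exp_pos _).le
          _ ≤ ∑ j, A i j * Real.exp (b j) :=
              Finset.single_le_sum (fun j _ => (mul_pos (hA i j) (Real.exp_pos _)).le)
                (mem_univ k)
      calc Real.log ε + b k = Real.log (ε * Real.exp (b k)) := by
            rw [Real.log_mul hεpos.ne' (Real.exp_ne_zero _), Real.log_exp]
        _ ≤ _ := Real.log_le_log (mul_pos hεpos (Real.exp_pos _)) h1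
    have : (n : ℝ) * (Real.log ε + b k) ≤ ∑ i, Real.log (∑ j, A i j * Real.exp (b j)) := by
      calc (n : ℝ) * (Real.log ε + b k) = ∑ _i : Fin n, (Real.log ε + b k) := by
            rw [Finset.sum_const, card_univ, Fintype.card_fin, nsmul_eq_mul]
        _ ≤ _ := Finset.sum_le_sum fun i _ => hterm i
    unfold sinkH
    rw [hb]
    linarith
  -- bound on the sublevel set
  set M0 : ℝ := (sinkH A 0 - n * Real.log ε) / n with hM0
  have hnpos : (0:ℝ) < n := by exact_mod_cast hn
  have hM0nonneg : 0 ≤ M0 := by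
    have h0 := key 0 (by simp) ⟨0, hn⟩
    simp only [Pi.zero_apply, mul_zero, add_zero] at h0
    rw [hM0]
    exact div_nonneg (by linarith) hnpos.le
  have hbnd : ∀ b : Fin n → ℝ, ∑ j, b j = 0 → sinkH A b ≤ sinkH A 0 →
      ∀ k, |b k| ≤ n * M0 := by
    intro b hb hle k
    have hub : ∀ k, b k ≤ M0 := by
      intro k
      have := key b hb k
      rw [hM0]
      rw [le_div_iff₀ hnpos]
      nlinarith
    have hlb : -( (n:ℝ) * M0) ≤ b k := by
      have h1 : b k = - ∑ j ∈ univ \ {k}, b j := by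
        have := Finset.sum_update_of_mem (Finset.mem_univ k) b (b k)
        rw [Function.update_eq_self] at this
        linarith [this]
      have h2 : ∑ j ∈ univ \ {k}, b j ≤ ∑ _j ∈ univ \ {k}, M0 :=
        Finset.sum_le_sum fun j _ => hub j
      have h3 : (∑ _j ∈ univ \ {k}, M0) ≤ n * M0 := by
        rw [Finset.sum_const, nsmul_eq_mul]
        have : ((univ \ {k} : Finset (Fin n)).card : ℝ) ≤ n := by
          have := Finset.card_le_card (Finset.subset_univ (univ \ {k} : Finset (Fin n)))
          rw [card_univ, Fintype.card_fin] at this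
          exact_mod_cast this
        nlinarith
      linarith
    rw [abs_le]
    constructor
    · linarith
    · calc b k ≤ M0 := hub k
        _ ≤ n * M0 := by
            have h1n : (1:ℝ) ≤ n := by exact_mod_cast hn
            nlinarith
  -- the sublevel set
  set K : Set (Fin n → ℝ) := {b | ∑ j, b j = 0 ∧ sinkH A b ≤ sinkH A 0} with hK
  have hKne : K.Nonempty := ⟨0, by simp, le_refl _⟩
  have hKclosed : IsClosed K := by
    have h1 : IsClosed {b : Fin n → ℝ | ∑ j, b j = 0} :=
      isClosed_eq (continuous_finset_sum _ fun j _ => continuous_apply j) continuous_const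
    have h2 : IsClosed {b : Fin n → ℝ | sinkH A b ≤ sinkH A 0} :=
      isClosed_le (sinkH_continuous hn A hA) continuous_const
    exact h1.inter h2
  have hKbdd : Bornology.IsBounded K := by
    refine (Metric.isBounded_closedBall (x := (0 : Fin n → ℝ)) (r := n * M0)).subset ?_
    intro b hb
    rw [Metric.mem_closedBall, dist_zero_right]
    rw [pi_norm_le_iff_of_nonneg (by positivity)]
    intro k
    rw [Real.norm_eq_abs]
    exact hbnd b hb.1 hb.2 k
  obtain ⟨b, hbK, hbmin⟩ := (Metric.isCompact_of_isClosed_isBounded hKclosed hKbdd).exists_isMinOn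
    hKne (sinkH_continuous hn A hA).continuousOn
  refine ⟨b, fun b' => ?_⟩
  -- shift b' to have sum zero
  set c : ℝ := (∑ j, b' j) / n with hc
  set b'' : Fin n → ℝ := fun j => b' j - c with hb''
  have hshift : sinkH A b'' = sinkH A b' := by
    have := sinkH_shift hn A hA b'' c
    have heq : (fun j => b'' j + c) = b' := by funext j; simp [hb'']
    rw [heq] at this
    exact this.symm
  have hsum0 : ∑ j, b'' j = 0 := by
    simp only [hb'', Finset.sum_sub_distrib, Finset.sum_const, card_univ, Fintype.card_fin,
      nsmul_eq_mul, hc]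
    field_simp
    ring
  by_cases hcase : sinkH A b'' ≤ sinkH A 0
  · have : b'' ∈ K := ⟨hsum0, hcase⟩
    calc sinkH A b ≤ sinkH A b'' := hbmin this
      _ = sinkH A b' := hshift
  · push_neg at hcase
    calc sinkH A b ≤ sinkH A 0 := hbmin (show (0 : Fin n → ℝ) ∈ K from ⟨by simp, le_refl _⟩)
      _ ≤ sinkH A b'' := hcase.le
      _ = sinkH A b' := hshift

lemma sinkH_min_colsum {n : ℕ} (hn : 0 < n) (A : Matrix (Fin n) (Fin n) ℝ)
    (hA : ∀ i j, 0 < A i j) (b : Fin n → ℝ)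
    (hmin : ∀ b', sinkH A b ≤ sinkH A b') (j0 : Fin n) :
    ∑ i, (A i j0 * Real.exp (b j0)) / (∑ j, A i j * Real.exp (b j)) = 1 := by
  set c : Fin n → ℝ := fun i => ∑ j ∈ univ \ {j0}, A i j * Real.exp (b j) with hc
  have hc_nonneg : ∀ i, 0 ≤ c i := fun i =>
    Finset.sum_nonneg fun j _ => (mul_pos (hA i j) (Real.exp_pos _)).le
  have hsplit : ∀ (i : Fin n) (t : ℝ),
      (∑ j, A i j * Real.exp (Function.update b j0 t j)) = A i j0 * Real.exp t + c i := by
    intro i t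
    have : (fun j => A i j * Real.exp (Function.update b j0 t j))
        = Function.update (fun j => A i j * Real.exp (b j)) j0 (A i j0 * Real.exp t) := by
      funext j
      by_cases h : j = j0
      · subst h; simp
      · simp [Function.update_of_ne h]
    rw [this, Finset.sum_update_of_mem (Finset.mem_univ j0)]
  have hsplitb : ∀ t : ℝ, (∑ j, Function.update b j0 t j) = t + ∑ j ∈ univ \ {j0}, b j :=
    fun t => Finset.sum_update_of_mem (Finset.mem_univ j0) b t
  -- φ
  set φ : ℝ → ℝ := fun t => (∑ i, Real.log (A i j0 * Real.exp t + c i))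
      - (t + ∑ j ∈ univ \ {j0}, b j) with hφ
  have hφ_eq : ∀ t, φ t = sinkH A (Function.update b j0 t) := by
    intro t
    unfold sinkH
    rw [hsplitb t]
    simp only [hsplit]
    rfl
  have hpos : ∀ (i : Fin n) (t : ℝ), 0 < A i j0 * Real.exp t + c i := fun i t =>
    add_pos_of_pos_of_nonneg (mul_pos (hA i j0) (Real.exp_pos _)) (hc_nonneg i)
  have hderiv : HasDerivAt φ
      ((∑ i, (A i j0 * Real.exp (b j0)) / (A i j0 * Real.exp (b j0) + c i)) - 1) (b j0) := by
    have h1 : HasDerivAt (fun t => ∑ i, Real.log (A i j0 * Real.exp t + c i))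
        (∑ i, (A i j0 * Real.exp (b j0)) / (A i j0 * Real.exp (b j0) + c i)) (b j0) := by
      refine HasDerivAt.fun_sum fun i _ => ?_
      exact (((Real.hasDerivAt_exp (b j0)).const_mul (A i j0)).add_const (c i)).log
        (hpos i (b j0)).ne'
    have h2 : HasDerivAt (fun t : ℝ => t + ∑ j ∈ univ \ {j0}, b j) 1 (b j0) :=
      (hasDerivAt_id (b j0)).add_const _
    exact h1.sub h2
  have hlocmin : IsLocalMin φ (b j0) := by
    refine Filter.Eventually.of_forall fun t => ?_
    rw [hφ_eq, hφ_eq, Function.update_eq_self]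
    exact hmin _
  have hzero := hlocmin.hasDerivAt_eq_zero hderiv
  have hsum1 : ∑ i, (A i j0 * Real.exp (b j0)) / (A i j0 * Real.exp (b j0) + c i) = 1 := by
    linarith
  calc ∑ i, (A i j0 * Real.exp (b j0)) / (∑ j, A i j * Real.exp (b j))
      = ∑ i, (A i j0 * Real.exp (b j0)) / (A i j0 * Real.exp (b j0) + c i) := by
        refine Finset.sum_congr rfl fun i _ => ?_
        rw [← hsplit i (b j0), Function.update_eq_self]
    _ = 1 := hsum1


theorem sinkhorn_existence (n : ℕ) (A : Matrix (Fin n) (Fin n) ℝ)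
    (hA : ∀ i j, 0 < A i j) :
    ∃ d₁ d₂ : Fin n → ℝ, (∀ i, 0 < d₁ i) ∧ (∀ i, 0 < d₂ i) ∧
      diagonal d₁ * A * diagonal d₂ ∈ doublyStochastic ℝ (Fin n) := by
  rcases Nat.eq_zero_or_pos n with hn | hn
  · subst hn
    refine ⟨1, 1, fun i => one_pos, fun i => one_pos, ?_⟩
    rw [mem_doublyStochastic_iff_sum]
    exact ⟨fun i => i.elim0, fun i => i.elim0, fun j => j.elim0⟩
  · obtain ⟨b, hbmin⟩ := sinkH_exists_min hn A hA
    set d₁ : Fin n → ℝ := fun i => (∑ j, A i j * Real.exp (b j))⁻¹ with hd₁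
    set d₂ : Fin n → ℝ := fun j => Real.exp (b j) with hd₂
    have hd₁pos : ∀ i, 0 < d₁ i := fun i => inv_pos.mpr (sinkH_sum_pos hn A hA b i)
    have hd₂pos : ∀ j, 0 < d₂ j := fun j => Real.exp_pos _
    refine ⟨d₁, d₂, hd₁pos, hd₂pos, ?_⟩
    have hentry : ∀ i j, (diagonal d₁ * A * diagonal d₂) i j = d₁ i * A i j * d₂ j := by
      intro i j
      rw [Matrix.mul_diagonal, Matrix.diagonal_mul]
    rw [mem_doublyStochastic_iff_sum]
    refine ⟨fun i j => ?_, fun i => ?_, fun j => ?_⟩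
    · rw [hentry]
      exact le_of_lt (mul_pos (mul_pos (hd₁pos i) (hA i j)) (hd₂pos j))
    · simp only [hentry]
      have : ∑ j, d₁ i * A i j * d₂ j = d₁ i * ∑ j, A i j * Real.exp (b j) := by
        rw [Finset.mul_sum]
        exact Finset.sum_congr rfl fun j _ => by rw [hd₂]; ring
      rw [this, hd₁]
      exact inv_mul_cancel₀ (sinkH_sum_pos hn A hA b i).ne'
    · simp only [hentry]
      have hcol := sinkH_min_colsum hn A hA b hbmin j
      calc ∑ i, d₁ i * A i j * d₂ j
          = ∑ i, (A i j * Real.exp (b j)) / (∑ k, A i k * Real.exp (b k)) := by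
            refine Finset.sum_congr rfl fun i _ => ?_
            rw [hd₁, hd₂, div_eq_inv_mul]
            ring
        _ = 1 := hcol
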